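/- Let p be a prime, z a real number with 2 ≤ z < p, and u an integer with 1 ≤ u ≤ p-1. Then there exist integers v and w with u·v ≡ w (mod p), 0 < w ≤ p/z, and 0 < |v| ≤ z. -/

import Mathlib

theorem dirichlet_type_approx (p : ℕ) (hp : p.Prime) (z : ℝ)
    (hz2 : 2 ≤ z) (hzp : z < p) (u : ℕ) (hu1 : 1 ≤ u) (hup : u ≤ p - 1) :
    ∃ v w : ℤ, (u : ℤ) * v ≡ w [ZMOD (p : ℤ)] ∧
      0 < w ∧ (w : ℝ) ≤ (p : ℝ) / z ∧ 0 < |v| ∧ (|v| : ℝ) ≤ z := by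
  have hp0 : (0 : ℝ) < p := lt_of_le_of_lt (by linarith) hzp
  set n : ℕ := ⌊z⌋₊ with hn
  have hn2 : 2 ≤ n := Nat.le_floor hz2
  have hnz : (n : ℝ) ≤ z := Nat.floor_le (by linarith)
  have hzn1 : z < (n : ℝ) + 1 := Nat.lt_floor_add_one z
  obtain ⟨j, k, hk0, hkn, habs⟩ :=
    Real.exists_int_int_abs_mul_sub_le ((u : ℝ) / p) (n := n) (by omega)
  -- W = k*u - j*p
  set W : ℤ := k * u - j * p with hW
  have habs' : |(W : ℝ)| ≤ (p : ℝ) / (n + 1) := by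
    have := mul_le_mul_of_nonneg_right habs (le_of_lt hp0)
    have h1 : |(k : ℝ) * ((u : ℝ) / p) - j| * p = |(W : ℝ)| := by
      rw [← abs_of_pos hp0, ← abs_mul]
      congr 1
      field_simp [hW]
      rw [hW, abs_of_pos hp0]; push_cast; ring
    rw [h1] at this
    calc |(W : ℝ)| ≤ 1 / (n + 1) * p := this
      _ = (p : ℝ) / (n + 1) := by ring
  have hWp : |(W : ℝ)| ≤ (p : ℝ) / z := by
    refine habs'.trans ?_
    apply div_le_div_of_nonneg_left (le_of_lt hp0) (by linarith) (by linarith)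
  have hWne : W ≠ 0 := by
    intro h0
    have hdvd : (p : ℤ) ∣ k * u := ⟨j, by linarith [hW ▸ h0]⟩
    have hpk : ¬ ((p : ℤ) ∣ k) := by
      intro hd
      have : (p : ℤ) ≤ k := Int.le_of_dvd hk0 hd
      have hkz : (k : ℝ) ≤ z := le_trans (by exact_mod_cast hkn) hnz
      have : (p : ℝ) ≤ (k : ℝ) := by exact_mod_cast this
      linarith
    have hpu : ¬ ((p : ℤ) ∣ (u : ℤ)) := by
      intro hd
      have hpu' : p ∣ u := Int.ofNat_dvd.mp hd
      have := Nat.le_of_dvd (by omega) hpu'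
      have hp2 := hp.two_le
      omega
    rcases (Int.Prime.dvd_mul' (by exact_mod_cast hp) hdvd) with h | h
    · exact hpk h
    · exact hpu h
  have hkz : (k : ℝ) ≤ z := le_trans (by exact_mod_cast hkn) hnz
  rcases lt_or_gt_of_ne hWne with hneg | hpos
  · refine ⟨-k, -W, ?_, by omega, ?_, ?_, ?_⟩
    · exact Int.ModEq.symm (Int.modEq_iff_dvd.mpr ⟨-j, by rw [hW]; ring⟩)
    · refine le_trans ?_ hWp
      rw [Int.cast_neg]
      exact neg_le_abs _
    · rw [abs_neg, abs_of_pos hk0]; exact hk0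
    · push_cast
      rw [abs_neg, abs_of_pos (by exact_mod_cast hk0 : (0:ℝ) < (k:ℝ))]
      exact hkz
  · refine ⟨k, W, ?_, hpos, ?_, ?_, ?_⟩
    · exact Int.ModEq.symm (Int.modEq_iff_dvd.mpr ⟨j, by rw [hW]; ring⟩)
    · refine le_trans ?_ hWp
      exact le_abs_self _
    · rw [abs_of_pos hk0]; exact hk0
    · rw [abs_of_pos (by exact_mod_cast hk0 : (0:ℝ) < (k:ℝ))]
      exact hkz
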